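/- Let X be a standard Borel space with a σ-finite Borel measure μ and let g : X → X be a measurable map such that g(x) ≠ x for μ-almost every x. Then there exists a countable family of measurable sets U_n ⊆ X such that the sets U_n ∖ g⁻¹(U_n) cover X up to a set of μ-measure zero. -/
import Mathlib


open MeasureTheory

/-- If `X` is a standard Borel space with a σ-finite Borel measure `μ` and `g : X → X` is a
measurable map with `g(x) ≠ x` for μ-a.e. `x`, then there is a countable family of measurable
sets `U n ⊆ X` such that the sets `U n ∖ g⁻¹(U n)` cover `X` up to a μ-null set. -/
theorem stmt6 {X : Type*} [MeasurableSpace X] [StandardBorelSpace X]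
    (μ : Measure X) [SigmaFinite μ] (g : X → X) (hg : Measurable g)
    (hfix : ∀ᵐ x ∂μ, g x ≠ x) :
    ∃ U : ℕ → Set X, (∀ n, MeasurableSet (U n)) ∧
      ∀ᵐ x ∂μ, ∃ n, x ∈ U n \ g ⁻¹' (U n) := by
  letI := upgradeStandardBorel X
  obtain ⟨b, hbc, -, hb⟩ := TopologicalSpace.exists_countable_basis X
  have hne : (insert (∅ : Set X) b).Nonempty := ⟨∅, Set.mem_insert _ _⟩
  obtain ⟨f, hf⟩ := ((hbc.insert ∅).exists_eq_range hne)
  refine ⟨f, ?_, ?_⟩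
  · intro n
    have hmem : f n ∈ insert (∅ : Set X) b := by rw [hf]; exact Set.mem_range_self n
    rcases hmem with h | h
    · rw [h]; exact MeasurableSet.empty
    · exact (hb.isOpen h).measurableSet
  · filter_upwards [hfix] with x hx
    obtain ⟨v, hvb, hxv, hvs⟩ := hb.exists_subset_of_mem_open
      (show x ∈ ({g x}ᶜ : Set X) from fun h => hx (Set.mem_singleton_iff.mp h).symm)
      isOpen_compl_singleton
    have : v ∈ Set.range f := by rw [← hf]; exact Set.mem_insert_of_mem _ hvb
    obtain ⟨n, rfl⟩ := this
    exact ⟨n, hxv, fun h => hvs h rfl⟩
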